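/- The following filling-shape-Wilf-equivalences hold among consecutive patterns of length 4: 1342 ≡_fs 1432, 2341 ≡_fs 2431, 4213 ≡_fs 4123, and 3214 ≡_fs 3124. -/

import Mathlib

/-- The set of permutation words of length `n`: injective functions
`Fin n → ℕ` whose range is `{1, …, n}` (the word `π_1 π_2 ⋯ π_n`). -/
def PermWords (n : ℕ) : Set (Fin n → ℕ) :=
  {π | Function.Injective π ∧ Set.range π = Set.Icc 1 n}

/-- A word `σ : Fin k → ℕ` is a permutation word, i.e. an element of `S_k`. -/
def IsPermWord {k : ℕ} (σ : Fin k → ℕ) : Prop :=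
  Function.Injective σ ∧ Set.range σ = Set.Icc 1 k

/-- `π` contains the vincular pattern `(σ, T)`.  Here `T ⊆ {1, …, k-1}` is the set of
(1-based) adjacency indices: `j ∈ T` forces the `j`-th and `(j+1)`-st letters of an
occurrence to be at adjacent positions.  (Positions are 0-based `Fin` indices, so the
1-based adjacency index `j+1 ∈ T` relates 0-based positions `j` and `j+1`.) -/
def Contains {n k : ℕ} (π : Fin n → ℕ) (σ : Fin k → ℕ) (T : Set ℕ) : Prop :=
  ∃ idx : Fin k → Fin n, StrictMono idx ∧
    (∀ s t : Fin k, π (idx s) < π (idx t) ↔ σ s < σ t) ∧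
    (∀ j : ℕ, j + 1 ∈ T → ∀ h : j + 1 < k,
      ((idx ⟨j + 1, h⟩ : ℕ) = (idx ⟨j, Nat.lt_of_succ_lt h⟩ : ℕ) + 1))

/-- The first `z` letters of `a` are order-isomorphic to the last `z` letters of `b`
(i.e. `a_1 ⋯ a_z ∼ b_{k-z+1} ⋯ b_k`). -/
def OrderIsoAt {k : ℕ} (a b : Fin k → ℕ) (z : ℕ) : Prop :=
  ∀ s t : Fin k, (s : ℕ) < z → (t : ℕ) < z →
    ∀ hs : k - z + (s : ℕ) < k, ∀ ht : k - z + (t : ℕ) < k,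
      (a s < a t ↔ b ⟨k - z + (s : ℕ), hs⟩ < b ⟨k - z + (t : ℕ), ht⟩)

/-- A Young diagram: a finite, downward-closed set of cells with positive coordinates
(first coordinate = column, second coordinate = row). -/
structure YoungShape where
  cells : Set (ℕ × ℕ)
  finite : cells.Finite
  pos : ∀ c ∈ cells, 1 ≤ c.1 ∧ 1 ≤ c.2
  lower : ∀ c ∈ cells, ∀ a b : ℕ, 1 ≤ a → a ≤ c.1 → 1 ≤ b → b ≤ c.2 → (a, b) ∈ cells

/-- A filling of a Young diagram: a set of selected cells with pairwise distinct
first coordinates and pairwise distinct second coordinates. -/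
def IsFilling (D : YoungShape) (F : Set (ℕ × ℕ)) : Prop :=
  F ⊆ D.cells ∧
  (∀ c ∈ F, ∀ c' ∈ F, c.1 = c'.1 → c = c') ∧
  (∀ c ∈ F, ∀ c' ∈ F, c.2 = c'.2 → c = c')

/-- A filling `F` of the Young diagram `D` contains the vincular pattern `(σ, T)`. -/
def FillingContains (D : YoungShape) (F : Set (ℕ × ℕ)) {k : ℕ}
    (σ : Fin k → ℕ) (T : Set ℕ) : Prop :=
  ∃ idx v : Fin k → ℕ, StrictMono idx ∧
    (∀ s : Fin k, (idx s, v s) ∈ F) ∧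
    (∀ s t : Fin k, v s < v t ↔ σ s < σ t) ∧
    (∀ s t : Fin k, (idx s, v t) ∈ D.cells) ∧
    (∀ j : ℕ, j + 1 ∈ T → ∀ h : j + 1 < k,
      idx ⟨j + 1, h⟩ = idx ⟨j, Nat.lt_of_succ_lt h⟩ + 1)

/-- The rows of `D` containing no selected cell of `F`. -/
def emptyRows (D : YoungShape) (F : Set (ℕ × ℕ)) : Set ℕ :=
  {r | (∃ c ∈ D.cells, c.2 = r) ∧ ∀ c ∈ F, c.2 ≠ r}

/-- The columns of `D` containing no selected cell of `F`. -/
def emptyCols (D : YoungShape) (F : Set (ℕ × ℕ)) : Set ℕ :=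
  {r | (∃ c ∈ D.cells, c.1 = r) ∧ ∀ c ∈ F, c.1 ≠ r}

/-- Filling-shape-Wilf-equivalence of the vincular patterns `(σ, Tσ)` and `(τ, Tτ)`. -/
def FSWilfEquiv {k : ℕ} (σ : Fin k → ℕ) (Tσ : Set ℕ) (τ : Fin k → ℕ) (Tτ : Set ℕ) : Prop :=
  ∀ (D : YoungShape) (R C : Set ℕ),
    {F : Set (ℕ × ℕ) | IsFilling D F ∧ ¬ FillingContains D F σ Tσ ∧
      emptyRows D F = R ∧ emptyCols D F = C}.ncard =
    {F : Set (ℕ × ℕ) | IsFilling D F ∧ ¬ FillingContains D F τ Tτ ∧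
      emptyRows D F = R ∧ emptyCols D F = C}.ncard

/-- The consecutive pattern `σ'` (of length `k`) occurs in `π` at the 1-based
positions `x+1, …, x+k`. -/
def OccursAt {n k : ℕ} (π : Fin n → ℕ) (σ' : Fin k → ℕ) (x : ℕ) : Prop :=
  ∃ h : x + k ≤ n, ∀ s t : Fin k,
    (π ⟨x + (s : ℕ), by have := s.isLt; omega⟩ < π ⟨x + (t : ℕ), by have := t.isLt; omega⟩
      ↔ σ' s < σ' t)

/-- `T_n(σ)[v]` for a quasi-consecutive pattern `σ = σ_1 ⋯ σ_k - σ_{k+1}`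
(adjacency set `{1, …, k-1}`): the number of `σ`-avoiding permutations of length `n`
beginning with the word `v`. -/
noncomputable def Tnv (n : ℕ) {k : ℕ} (σ : Fin (k + 1) → ℕ) {r : ℕ} (v : Fin r → ℕ) : ℕ :=
  {π : Fin n → ℕ | π ∈ PermWords n ∧ ¬ Contains π σ (Set.Icc 1 (k - 1)) ∧
    ∀ p : Fin r, ∀ h : (p : ℕ) < n, π ⟨(p : ℕ), h⟩ = v p}.ncard

/-- `T_n(σ)[x, i, w]` for a quasi-consecutive pattern `σ = σ_1 ⋯ σ_k - σ_{k+1}`: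
the number of `σ`-avoiding permutations of length `n` whose earliest occurrence of
the consecutive pattern `σ_1 ⋯ σ_k` is at 1-based positions `x+1, …, x+k` and such
that `w = π_1 ⋯ π_{x+i-1} π_{x+i+1} ⋯ π_{x+k}`. -/
noncomputable def TnXIW (n : ℕ) {k : ℕ} (σ : Fin (k + 1) → ℕ) (x i : ℕ) (w : Fin (x + k - 1) → ℕ) : ℕ :=
  {π : Fin n → ℕ | π ∈ PermWords n ∧ ¬ Contains π σ (Set.Icc 1 (k - 1)) ∧
    OccursAt π (fun t : Fin k => σ t.castSucc) x ∧
    (∀ x' < x, ¬ OccursAt π (fun t : Fin k => σ t.castSucc) x') ∧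
    (∀ p : Fin (x + k - 1), ∀ h1 : (p : ℕ) < n, ∀ h2 : (p : ℕ) + 1 < n,
      w p = if (p : ℕ) + 1 ≤ x + i - 1 then π ⟨(p : ℕ), h1⟩ else π ⟨(p : ℕ) + 1, h2⟩)}.ncard

/-- `T_n(σ) = |S_n(σ)|` for a length-5 quasi-consecutive pattern word `σ`
(adjacency set `T = {1,2,3}`). -/
noncomputable def T0 (n : ℕ) (σ : Fin 5 → ℕ) : ℕ :=
  {π : Fin n → ℕ | π ∈ PermWords n ∧ ¬ Contains π σ ({1, 2, 3} : Set ℕ)}.ncard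

/-- `T_n(σ)[k]`: the number of `σ`-avoiding permutations of length `n` with `π_1 = a`. -/
noncomputable def T1 (n : ℕ) (σ : Fin 5 → ℕ) (a : ℕ) : ℕ :=
  {π : Fin n → ℕ | π ∈ PermWords n ∧ ¬ Contains π σ ({1, 2, 3} : Set ℕ) ∧
    ∀ h : 0 < n, π ⟨0, h⟩ = a}.ncard

/-- `T_n(σ)[k, ℓ]`: the number of `σ`-avoiding permutations of length `n` with
`π_1 = a` and `π_2 = b`. -/
noncomputable def T2 (n : ℕ) (σ : Fin 5 → ℕ) (a b : ℕ) : ℕ :=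
  {π : Fin n → ℕ | π ∈ PermWords n ∧ ¬ Contains π σ ({1, 2, 3} : Set ℕ) ∧
    (∀ h : 0 < n, π ⟨0, h⟩ = a) ∧ (∀ h : 1 < n, π ⟨1, h⟩ = b)}.ncard

section FSWaux

variable {lt : ℕ → ℕ → Prop} {D : YoungShape} {F : Set (ℕ × ℕ)}

/-- A "bad quadruple" at column `c`: four selected cells in consecutive columns with
the two outer values `lt`-below (resp. above) both middle values, with the full box
inside the diagram. -/
def Bad (lt : ℕ → ℕ → Prop) (D : YoungShape) (F : Set (ℕ × ℕ)) (c : ℕ) : Prop :=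
  ∃ r0 r1 r2 r3 : ℕ,
    (c, r0) ∈ F ∧ (c + 1, r1) ∈ F ∧ (c + 2, r2) ∈ F ∧ (c + 3, r3) ∈ F ∧
    (∀ i, i ≤ 3 → ∀ r, (r = r0 ∨ r = r1 ∨ r = r2 ∨ r = r3) → (c + i, r) ∈ D.cells) ∧
    lt r0 r1 ∧ lt r0 r2 ∧ lt r3 r1 ∧ lt r3 r2

/-- The involution on fillings: swap the two middle values of every bad quadruple. -/
def phi (lt : ℕ → ℕ → Prop) (D : YoungShape) (F : Set (ℕ × ℕ)) : Set (ℕ × ℕ) :=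
  {p | (Bad lt D F (p.1 - 1) ∧ (p.1 + 1, p.2) ∈ F) ∨
       (Bad lt D F (p.1 - 2) ∧ (p.1 - 1, p.2) ∈ F) ∨
       (¬ Bad lt D F (p.1 - 1) ∧ ¬ Bad lt D F (p.1 - 2) ∧ p ∈ F)}

lemma mem_phi {x r : ℕ} :
    (x, r) ∈ phi lt D F ↔
      (Bad lt D F (x - 1) ∧ (x + 1, r) ∈ F) ∨
      (Bad lt D F (x - 2) ∧ (x - 1, r) ∈ F) ∨
      (¬ Bad lt D F (x - 1) ∧ ¬ Bad lt D F (x - 2) ∧ (x, r) ∈ F) := Iff.rfl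

lemma colEq (hF : IsFilling D F) {x a b : ℕ} (ha : (x, a) ∈ F) (hb : (x, b) ∈ F) :
    a = b :=
  congrArg Prod.snd (hF.2.1 _ ha _ hb rfl)

lemma rowEq (hF : IsFilling D F) {x y a : ℕ} (ha : (x, a) ∈ F) (hb : (y, a) ∈ F) :
    x = y :=
  congrArg Prod.fst (hF.2.2 _ ha _ hb rfl)

lemma bad_pos (hF : IsFilling D F) {c : ℕ} (h : Bad lt D F c) : 1 ≤ c := by
  obtain ⟨r0, _, _, _, h0, -⟩ := h
  exact (D.pos _ (hF.1 h0)).1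

/-- Two bad quadruples cannot be at distance 1. -/
lemma dist1 (hF : IsFilling D F) (hasym : ∀ a b, lt a b → lt b a → False) {c d : ℕ}
    (hc : Bad lt D F c) (hd : Bad lt D F d) (hcd : d = c + 1) : False := by
  subst hcd
  obtain ⟨r0, r1, r2, r3, h0, h1, h2, h3, hbox, o1, o2, o3, o4⟩ := hc
  obtain ⟨s0, s1, s2, s3, g0, g1, g2, g3, gbox, p1, p2, p3, p4⟩ := hd
  -- r1 and s0 are both at column c+1 ; r3 and s2 at column c+3
  have e1 : r1 = s0 := colEq hF h1 g0
  have e2 : r3 = s2 := by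
    refine colEq hF h3 ?_
    have : c + 1 + 2 = c + 3 := by omega
    rwa [this] at g2
  exact hasym _ _ o3 (by rw [e1, e2] at *; exact p2)

/-- Two bad quadruples cannot be at distance 2. -/
lemma dist2 (hF : IsFilling D F) (hasym : ∀ a b, lt a b → lt b a → False) {c d : ℕ}
    (hc : Bad lt D F c) (hd : Bad lt D F d) (hcd : d = c + 2) : False := by
  subst hcd
  obtain ⟨r0, r1, r2, r3, h0, h1, h2, h3, hbox, o1, o2, o3, o4⟩ := hc
  obtain ⟨s0, s1, s2, s3, g0, g1, g2, g3, gbox, p1, p2, p3, p4⟩ := hd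
  have e1 : r2 = s0 := colEq hF h2 g0
  have e2 : r3 = s1 := by
    refine colEq hF h3 ?_
    have : c + 2 + 1 = c + 3 := by omega
    rwa [this] at g1
  rw [e1, e2] at o4
  exact hasym _ _ o4 p1

end FSWaux
section FSWaux2

variable {lt : ℕ → ℕ → Prop} {D : YoungShape} {F : Set (ℕ × ℕ)}

/-- If column `x` is the left middle column of a bad quadruple, `phi` puts the value
from column `x+1` there. -/
lemma phi_g1 (hF : IsFilling D F) (hasym : ∀ a b, lt a b → lt b a → False)
    {x r : ℕ} (hb : Bad lt D F (x - 1)) :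
    ((x, r) ∈ phi lt D F ↔ (x + 1, r) ∈ F) := by
  have hx : 1 ≤ x - 1 := bad_pos hF hb
  constructor
  · intro h
    rcases mem_phi.1 h with ⟨_, h⟩ | ⟨hb2, _⟩ | ⟨hn, _, _⟩
    · exact h
    · exact absurd hb (by intro _; exact dist1 hF hasym hb2 hb (by omega))
    · exact absurd hb hn
  · intro h; exact mem_phi.2 (Or.inl ⟨hb, h⟩)

/-- If column `x` is the right middle column of a bad quadruple, `phi` puts the value
from column `x-1` there. -/
lemma phi_g2 (hF : IsFilling D F) (hasym : ∀ a b, lt a b → lt b a → False)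
    {x r : ℕ} (hb : Bad lt D F (x - 2)) :
    ((x, r) ∈ phi lt D F ↔ (x - 1, r) ∈ F) := by
  have hx : 1 ≤ x - 2 := bad_pos hF hb
  constructor
  · intro h
    rcases mem_phi.1 h with ⟨hb1, _⟩ | ⟨_, h⟩ | ⟨_, hn, _⟩
    · exact absurd hb1 (by intro _; exact dist1 hF hasym hb hb1 (by omega))
    · exact h
    · exact absurd hb hn
  · intro h; exact mem_phi.2 (Or.inr (Or.inl ⟨hb, h⟩))

/-- Columns away from every bad quadruple's middle pair are left unchanged by `phi`. -/
lemma phi_g3 {x r : ℕ} (hn1 : ¬ Bad lt D F (x - 1)) (hn2 : ¬ Bad lt D F (x - 2)) :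
    ((x, r) ∈ phi lt D F ↔ (x, r) ∈ F) := by
  constructor
  · intro h
    rcases mem_phi.1 h with ⟨hb, _⟩ | ⟨hb, _⟩ | ⟨_, _, h⟩
    · exact absurd hb hn1
    · exact absurd hb hn2
    · exact h
  · intro h; exact mem_phi.2 (Or.inr (Or.inr ⟨hn1, hn2, h⟩))

end FSWaux2
section FSWaux3

variable {lt : ℕ → ℕ → Prop} {D : YoungShape} {F : Set (ℕ × ℕ)}

lemma phi_subset (hF : IsFilling D F) : phi lt D F ⊆ D.cells := by
  rintro ⟨x, r⟩ h
  rcases mem_phi.1 h with ⟨hb, hm⟩ | ⟨hb, hm⟩ | ⟨_, _, hm⟩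
  · have hx : 1 ≤ x - 1 := bad_pos hF hb
    obtain ⟨r0, r1, r2, r3, h0, h1, h2, h3, hbox, -⟩ := hb
    have e2 : x - 1 + 2 = x + 1 := by omega
    rw [e2] at h2
    have : r = r2 := colEq hF hm h2
    have := hbox 1 (by omega) r2 (by tauto)
    have e1 : x - 1 + 1 = x := by omega
    rw [e1] at this
    rwa [‹r = r2›]
  · have hx : 1 ≤ x - 2 := bad_pos hF hb
    obtain ⟨r0, r1, r2, r3, h0, h1, h2, h3, hbox, -⟩ := hb
    have e1 : x - 2 + 1 = x - 1 := by omega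
    rw [e1] at h1
    have : r = r1 := colEq hF hm h1
    have := hbox 2 (by omega) r1 (by tauto)
    have e2 : x - 2 + 2 = x := by omega
    rw [e2] at this
    rwa [‹r = r1›]
  · exact hF.1 hm

lemma phi_source (hF : IsFilling D F) {x r : ℕ} (h : (x, r) ∈ phi lt D F) :
    ∃ y, (y, r) ∈ F ∧
      ((y = x + 1 ∧ Bad lt D F (x - 1)) ∨
       (y + 1 = x ∧ Bad lt D F (x - 2)) ∨
       (y = x ∧ ¬ Bad lt D F (x - 1) ∧ ¬ Bad lt D F (x - 2))) := by
  rcases mem_phi.1 h with ⟨hb, hm⟩ | ⟨hb, hm⟩ | ⟨hn1, hn2, hm⟩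
  · exact ⟨x + 1, hm, Or.inl ⟨rfl, hb⟩⟩
  · have := bad_pos hF hb
    exact ⟨x - 1, hm, Or.inr (Or.inl ⟨by omega, hb⟩)⟩
  · exact ⟨x, hm, Or.inr (Or.inr ⟨rfl, hn1, hn2⟩)⟩

lemma phi_rowEq (hF : IsFilling D F) (hasym : ∀ a b, lt a b → lt b a → False)
    {x y a : ℕ} (hx : (x, a) ∈ phi lt D F) (hy : (y, a) ∈ phi lt D F) : x = y := by
  obtain ⟨sx, hsx, cx⟩ := phi_source hF hx
  obtain ⟨sy, hsy, cy⟩ := phi_source hF hy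
  have hs : sx = sy := rowEq hF hsx hsy
  rcases cx with ⟨e1, b1⟩ | ⟨e1, b1⟩ | ⟨e1, n1, n2⟩ <;>
      rcases cy with ⟨e2, b2⟩ | ⟨e2, b2⟩ | ⟨e2, m1, m2⟩
  · omega
  · -- x middle-left, y middle-right : y = x + 2
    exfalso
    have hx1 : 1 ≤ x - 1 := bad_pos hF b1
    have hy2 : 1 ≤ y - 2 := bad_pos hF b2
    have : y - 2 = x := by omega
    rw [this] at b2
    exact dist1 hF hasym b1 b2 (by omega)
  · exfalso
    have hx1 : 1 ≤ x - 1 := bad_pos hF b1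
    have : y - 2 = x - 1 := by omega
    rw [this] at m2
    exact m2 b1
  · -- symmetric of case 2
    exfalso
    have hx2 : 1 ≤ x - 2 := bad_pos hF b1
    have hy1 : 1 ≤ y - 1 := bad_pos hF b2
    have : x - 2 = y := by omega
    rw [this] at b1
    exact dist1 hF hasym b2 b1 (by omega)
  · omega
  · exfalso
    have hx2 : 1 ≤ x - 2 := bad_pos hF b1
    have : y - 1 = x - 2 := by omega
    rw [this] at m1
    exact m1 b1
  · exfalso
    have hy1 : 1 ≤ y - 1 := bad_pos hF b2
    have : x - 2 = y - 1 := by omega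
    rw [this] at n2
    exact n2 b2
  · exfalso
    have hy2 : 1 ≤ y - 2 := bad_pos hF b2
    have : x - 1 = y - 2 := by omega
    rw [this] at n1
    exact n1 b2
  · omega

lemma phi_filling (hF : IsFilling D F) (hasym : ∀ a b, lt a b → lt b a → False) :
    IsFilling D (phi lt D F) := by
  refine ⟨phi_subset hF, ?_, ?_⟩
  · rintro ⟨x, a⟩ ha ⟨x', b⟩ hb (h : x = x')
    subst h
    have : a = b := by
      by_cases h1 : Bad lt D F (x - 1)
      · rw [phi_g1 hF hasym h1] at ha hb
        exact colEq hF ha hb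
      · by_cases h2 : Bad lt D F (x - 2)
        · rw [phi_g2 hF hasym h2] at ha hb
          exact colEq hF ha hb
        · rw [phi_g3 h1 h2] at ha hb
          exact colEq hF ha hb
    rw [this]
  · rintro ⟨x, a⟩ ha ⟨y, b⟩ hb (h : a = b)
    subst h
    have : x = y := phi_rowEq hF hasym ha hb
    rw [this]

lemma phi_cols (hF : IsFilling D F) {x : ℕ} :
    (∃ r, (x, r) ∈ phi lt D F) ↔ ∃ r, (x, r) ∈ F := by
  constructor
  · rintro ⟨r, h⟩
    rcases mem_phi.1 h with ⟨hb, hm⟩ | ⟨hb, hm⟩ | ⟨_, _, hm⟩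
    · have hx : 1 ≤ x - 1 := bad_pos hF hb
      obtain ⟨r0, r1, r2, r3, h0, h1, -⟩ := hb
      have e : x - 1 + 1 = x := by omega
      rw [e] at h1
      exact ⟨r1, h1⟩
    · have hx : 1 ≤ x - 2 := bad_pos hF hb
      obtain ⟨r0, r1, r2, r3, h0, h1, h2, -⟩ := hb
      have e : x - 2 + 2 = x := by omega
      rw [e] at h2
      exact ⟨r2, h2⟩
    · exact ⟨r, hm⟩
  · rintro ⟨r, h⟩
    by_cases h1 : Bad lt D F (x - 1)
    · have hx : 1 ≤ x - 1 := bad_pos hF h1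
      obtain ⟨r0, r1, r2, r3, h0, hh1, hh2, -⟩ := id h1
      have e : x - 1 + 2 = x + 1 := by omega
      rw [e] at hh2
      exact ⟨r2, mem_phi.2 (Or.inl ⟨h1, hh2⟩)⟩
    · by_cases h2 : Bad lt D F (x - 2)
      · have hx : 1 ≤ x - 2 := bad_pos hF h2
        obtain ⟨r0, r1, r2, r3, h0, hh1, -⟩ := id h2
        have e : x - 2 + 1 = x - 1 := by omega
        rw [e] at hh1
        exact ⟨r1, mem_phi.2 (Or.inr (Or.inl ⟨h2, hh1⟩))⟩
      · exact ⟨r, mem_phi.2 (Or.inr (Or.inr ⟨h1, h2, h⟩))⟩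

lemma phi_rows (hF : IsFilling D F) {r : ℕ} :
    (∃ x, (x, r) ∈ phi lt D F) ↔ ∃ x, (x, r) ∈ F := by
  constructor
  · rintro ⟨x, h⟩
    obtain ⟨y, hy, -⟩ := phi_source hF h
    exact ⟨y, hy⟩
  · rintro ⟨y, h⟩
    have hy1 : 1 ≤ y := (D.pos _ (hF.1 h)).1
    by_cases h1 : Bad lt D F (y - 1)
    · refine ⟨y + 1, mem_phi.2 (Or.inr (Or.inl ?_))⟩
      have e2 : y + 1 - 2 = y - 1 := by omega
      have e1 : y + 1 - 1 = y := by omega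
      rw [e2, e1]
      exact ⟨h1, h⟩
    · by_cases h2 : Bad lt D F (y - 2)
      · have hy2 : 1 ≤ y - 2 := bad_pos hF h2
        refine ⟨y - 1, mem_phi.2 (Or.inl ?_)⟩
        have e1 : y - 1 - 1 = y - 2 := by omega
        have e2 : y - 1 + 1 = y := by omega
        rw [e1, e2]
        exact ⟨h2, h⟩
      · exact ⟨y, mem_phi.2 (Or.inr (Or.inr ⟨h1, h2, h⟩))⟩

end FSWaux3
section FSWaux4

variable {lt : ℕ → ℕ → Prop} {D : YoungShape} {F : Set (ℕ × ℕ)}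

lemma bad_phi_of_bad (hF : IsFilling D F) (hasym : ∀ a b, lt a b → lt b a → False)
    {c : ℕ} (hb : Bad lt D F c) : Bad lt D (phi lt D F) c := by
  have hc : 1 ≤ c := bad_pos hF hb
  have n1 : ¬ Bad lt D F (c - 1) := fun h => dist1 hF hasym h hb (by have := bad_pos hF h; omega)
  have n2 : ¬ Bad lt D F (c - 2) := fun h => dist2 hF hasym h hb (by have := bad_pos hF h; omega)
  have n4 : ¬ Bad lt D F (c + 1) := fun h => dist1 hF hasym hb h rfl
  have n5 : ¬ Bad lt D F (c + 2) := fun h => dist2 hF hasym hb h rfl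
  obtain ⟨r0, r1, r2, r3, h0, h1, h2, h3, hbox, o1, o2, o3, o4⟩ := hb
  refine ⟨r0, r2, r1, r3, ?_, ?_, ?_, ?_, ?_, o2, o1, o4, o3⟩
  · exact (phi_g3 n1 n2).2 h0
  · refine (phi_g1 hF hasym ?_).2 ?_
    · have e : c + 1 - 1 = c := by omega
      rw [e]; exact ⟨r0, r1, r2, r3, h0, h1, h2, h3, hbox, o1, o2, o3, o4⟩
    · exact h2
  · refine (phi_g2 hF hasym ?_).2 ?_
    · have e : c + 2 - 2 = c := by omega
      rw [e]; exact ⟨r0, r1, r2, r3, h0, h1, h2, h3, hbox, o1, o2, o3, o4⟩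
    · have e : c + 2 - 1 = c + 1 := by omega
      rw [e]; exact h1
  · refine (phi_g3 ?_ ?_).2 h3
    · have e : c + 3 - 1 = c + 2 := by omega
      rw [e]; exact n5
    · have e : c + 3 - 2 = c + 1 := by omega
      rw [e]; exact n4
  · intro i hi r hr
    exact hbox i hi r (by tauto)

lemma bad_of_bad_phi (hF : IsFilling D F) (hasym : ∀ a b, lt a b → lt b a → False)
    {c : ℕ} (hb : Bad lt D (phi lt D F) c) : Bad lt D F c := by
  by_cases hc : Bad lt D F c
  · exact hc
  exfalso
  obtain ⟨r0, r1, r2, r3, h0, h1, h2, h3, hbox, o1, o2, o3, o4⟩ := hb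
  have hc1 : 1 ≤ c := (D.pos _ ((phi_filling hF hasym).1 h0)).1
  by_cases b1 : Bad lt D F (c - 1)
  · -- middles of the (c-1)-quadruple are c and c+1
    have hcc : 2 ≤ c := by have := bad_pos hF b1; omega
    -- column c : value comes from column c + 1
    have e0 : (c + 1, r0) ∈ F := (phi_g1 hF hasym b1).1 h0
    -- column c + 2 is unchanged
    have n4 : ¬ Bad lt D F (c + 1) := fun h => dist2 hF hasym b1 h (by omega)
    have e2 : (c + 2, r2) ∈ F := by
      refine (phi_g3 ?_ ?_).1 h2
      · have e : c + 2 - 1 = c + 1 := by omega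
        rw [e]; exact n4
      · have e : c + 2 - 2 = c := by omega
        rw [e]; exact hc
    obtain ⟨s0, s1, s2, s3, g0, g1, g2, g3, -, p1, p2, p3, p4⟩ := b1
    have f2 : c - 1 + 2 = c + 1 := by omega
    have f3 : c - 1 + 3 = c + 2 := by omega
    rw [f2] at g2; rw [f3] at g3
    have e1 : r0 = s2 := colEq hF e0 g2
    have e2' : r2 = s3 := colEq hF e2 g3
    rw [e1, e2'] at o2
    exact hasym _ _ o2 p4
  · by_cases b2 : Bad lt D F (c - 2)
    · have hcc : 3 ≤ c := by have := bad_pos hF b2; omega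
      have e0 : (c - 1, r0) ∈ F := (phi_g2 hF hasym b2).1 h0
      have e1 : (c + 1, r1) ∈ F := by
        refine (phi_g3 ?_ ?_).1 h1
        · have e : c + 1 - 1 = c := by omega
          rw [e]; exact hc
        · have e : c + 1 - 2 = c - 1 := by omega
          rw [e]; exact b1
      obtain ⟨s0, s1, s2, s3, g0, g1, g2, g3, -, p1, p2, p3, p4⟩ := b2
      have f1 : c - 2 + 1 = c - 1 := by omega
      have f3 : c - 2 + 3 = c + 1 := by omega
      rw [f1] at g1; rw [f3] at g3
      have e0' : r0 = s1 := colEq hF e0 g1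
      have e1' : r1 = s3 := colEq hF e1 g3
      rw [e0', e1'] at o1
      exact hasym _ _ o1 p3
    · by_cases b4 : Bad lt D F (c + 1)
      · have e1 : (c + 1, r1) ∈ F := by
          refine (phi_g3 ?_ ?_).1 h1
          · have e : c + 1 - 1 = c := by omega
            rw [e]; exact hc
          · have e : c + 1 - 2 = c - 1 := by omega
            rw [e]; exact b1
        have e3 : (c + 2, r3) ∈ F := by
          have := (phi_g2 hF hasym (x := c + 3) (r := r3) ?_).1 h3
          · have e : c + 3 - 1 = c + 2 := by omega
            rwa [e] at this
          · have e : c + 3 - 2 = c + 1 := by omega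
            rw [e]; exact b4
        obtain ⟨s0, s1, s2, s3, g0, g1, g2, g3, -, p1, p2, p3, p4⟩ := b4
        have f1 : c + 1 + 1 = c + 2 := by omega
        rw [f1] at g1
        have e1' : r1 = s0 := colEq hF e1 g0
        have e3' : r3 = s1 := colEq hF e3 g1
        rw [e1', e3'] at o3
        exact hasym _ _ o3 p1
      · by_cases b5 : Bad lt D F (c + 2)
        · have e2 : (c + 2, r2) ∈ F := by
            refine (phi_g3 ?_ ?_).1 h2
            · have e : c + 2 - 1 = c + 1 := by omega
              rw [e]; exact b4
            · have e : c + 2 - 2 = c := by omega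
              rw [e]; exact hc
          have e3 : (c + 4, r3) ∈ F := by
            have := (phi_g1 hF hasym (x := c + 3) (r := r3) ?_).1 h3
            · have e : c + 3 + 1 = c + 4 := by omega
              rwa [e] at this
            · have e : c + 3 - 1 = c + 2 := by omega
              rw [e]; exact b5
          obtain ⟨s0, s1, s2, s3, g0, g1, g2, g3, -, p1, p2, p3, p4⟩ := b5
          have f2 : c + 2 + 2 = c + 4 := by omega
          rw [f2] at g2
          have e2' : r2 = s0 := colEq hF e2 g0
          have e3' : r3 = s2 := colEq hF e3 g2
          rw [e2', e3'] at o4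
          exact hasym _ _ o4 p2
        · refine hc ⟨r0, r1, r2, r3, ?_, ?_, ?_, ?_, hbox, o1, o2, o3, o4⟩
          · exact (phi_g3 b1 b2).1 h0
          · refine (phi_g3 ?_ ?_).1 h1
            · have e : c + 1 - 1 = c := by omega
              rw [e]; exact hc
            · have e : c + 1 - 2 = c - 1 := by omega
              rw [e]; exact b1
          · refine (phi_g3 ?_ ?_).1 h2
            · have e : c + 2 - 1 = c + 1 := by omega
              rw [e]; exact b4
            · have e : c + 2 - 2 = c := by omega
              rw [e]; exact hc
          · refine (phi_g3 ?_ ?_).1 h3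
            · have e : c + 3 - 1 = c + 2 := by omega
              rw [e]; exact b5
            · have e : c + 3 - 2 = c + 1 := by omega
              rw [e]; exact b4

end FSWaux4
section FSWaux5

variable {lt : ℕ → ℕ → Prop} {D : YoungShape} {F : Set (ℕ × ℕ)}

lemma bad_phi_iff (hF : IsFilling D F) (hasym : ∀ a b, lt a b → lt b a → False)
    {c : ℕ} : Bad lt D (phi lt D F) c ↔ Bad lt D F c :=
  ⟨bad_of_bad_phi hF hasym, bad_phi_of_bad hF hasym⟩

lemma phi_phi (hF : IsFilling D F) (hasym : ∀ a b, lt a b → lt b a → False) :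
    phi lt D (phi lt D F) = F := by
  have hP : IsFilling D (phi lt D F) := phi_filling hF hasym
  ext ⟨x, r⟩
  by_cases b1 : Bad lt D F (x - 1)
  · have hx : 1 ≤ x - 1 := bad_pos hF b1
    have bp1 : Bad lt D (phi lt D F) (x - 1) := bad_phi_of_bad hF hasym b1
    rw [phi_g1 hP hasym bp1]
    have e2 : x + 1 - 2 = x - 1 := by omega
    have e1 : x + 1 - 1 = x := by omega
    rw [show ((x + 1, r) ∈ phi lt D F) ↔ ((x + 1 - 1, r) ∈ F) from
      phi_g2 hF hasym (by rw [e2]; exact b1), e1]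
  · by_cases b2 : Bad lt D F (x - 2)
    · have hx : 1 ≤ x - 2 := bad_pos hF b2
      have bp2 : Bad lt D (phi lt D F) (x - 2) := bad_phi_of_bad hF hasym b2
      have np1 : ¬ Bad lt D (phi lt D F) (x - 1) := fun h => b1 (bad_of_bad_phi hF hasym h)
      rw [phi_g2 hP hasym bp2]
      have e1 : x - 1 - 1 = x - 2 := by omega
      have e2 : x - 1 + 1 = x := by omega
      rw [show ((x - 1, r) ∈ phi lt D F) ↔ ((x - 1 + 1, r) ∈ F) from
        phi_g1 hF hasym (by rw [e1]; exact b2), e2]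
    · have np1 : ¬ Bad lt D (phi lt D F) (x - 1) := fun h => b1 (bad_of_bad_phi hF hasym h)
      have np2 : ¬ Bad lt D (phi lt D F) (x - 2) := fun h => b2 (bad_of_bad_phi hF hasym h)
      rw [phi_g3 np1 np2, phi_g3 b1 b2]

end FSWaux5
section FSWaux6

variable {lt : ℕ → ℕ → Prop} {D : YoungShape} {F : Set (ℕ × ℕ)}

lemma contains_of_contains_phi (hF : IsFilling D F)
    (hasym : ∀ a b, lt a b → lt b a → False) {σ τ : Fin 4 → ℕ}
    (hστ : ∀ s, σ s = τ (Equiv.swap 1 2 s))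
    (hτ : ∀ v : Fin 4 → ℕ, (∀ s t : Fin 4, v s < v t ↔ τ s < τ t) →
      lt (v 0) (v 1) ∧ lt (v 0) (v 2) ∧ lt (v 3) (v 1) ∧ lt (v 3) (v 2))
    (h : FillingContains D (phi lt D F) τ (Set.Icc 1 3)) :
    FillingContains D F σ (Set.Icc 1 3) := by
  obtain ⟨idx, v, hmono, hmem, hiso, hbox, hadj⟩ := h
  set c := idx 0 with hc
  have h1 : idx 1 = c + 1 := by
    have := hadj 0 (by simp) (by norm_num)
    simpa using this
  have h2 : idx 2 = c + 2 := by
    have := hadj 1 (by simp) (by norm_num)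
    simp only [show (⟨1 + 1, by norm_num⟩ : Fin 4) = 2 from rfl,
      show (⟨1, by norm_num⟩ : Fin 4) = 1 from rfl] at this
    omega
  have h3 : idx 3 = c + 3 := by
    have := hadj 2 (by simp) (by norm_num)
    simp only [show (⟨2 + 1, by norm_num⟩ : Fin 4) = 3 from rfl,
      show (⟨2, by norm_num⟩ : Fin 4) = 2 from rfl] at this
    omega
  have key : ∀ s : Fin 4, idx s = c + (s : ℕ) := by
    intro s
    fin_cases s
    · simp only [Fin.isValue, Fin.val_zero, Nat.add_zero]; exact hc.symm
    · simpa using h1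
    · simpa using h2
    · simpa using h3
  have hbad : Bad lt D (phi lt D F) c := by
    obtain ⟨l1, l2, l3, l4⟩ := hτ v hiso
    refine ⟨v 0, v 1, v 2, v 3, ?_, ?_, ?_, ?_, ?_, l1, l2, l3, l4⟩
    · have := hmem 0; rwa [show idx 0 = c + 0 from key 0, Nat.add_zero] at this
    · have := hmem 1; rwa [key 1] at this
    · have := hmem 2; rwa [key 2] at this
    · have := hmem 3; rwa [key 3] at this
    · intro i hi r hr
      obtain ⟨t, rfl⟩ : ∃ t : Fin 4, r = v t := by
        rcases hr with rfl | rfl | rfl | rfl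
        exacts [⟨0, rfl⟩, ⟨1, rfl⟩, ⟨2, rfl⟩, ⟨3, rfl⟩]
      have := hbox ⟨i, by omega⟩ t
      rwa [key ⟨i, by omega⟩] at this
  have hbadF : Bad lt D F c := bad_of_bad_phi hF hasym hbad
  have hc1 : 1 ≤ c := bad_pos hF hbadF
  have n1 : ¬ Bad lt D F (c - 1) :=
    fun h => dist1 hF hasym h hbadF (by have := bad_pos hF h; omega)
  have n2 : ¬ Bad lt D F (c - 2) :=
    fun h => dist2 hF hasym h hbadF (by have := bad_pos hF h; omega)
  have n4 : ¬ Bad lt D F (c + 1) := fun h => dist1 hF hasym hbadF h rfl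
  have n5 : ¬ Bad lt D F (c + 2) := fun h => dist2 hF hasym hbadF h rfl
  -- decode the four cells of the occurrence back in F
  have m0 : (c, v 0) ∈ F := by
    refine (phi_g3 n1 n2).1 ?_
    have := hmem 0; rwa [show idx 0 = c + 0 from key 0, Nat.add_zero] at this
  have m1 : (c + 2, v 1) ∈ F := by
    have := (phi_g1 hF hasym (x := c + 1) (r := v 1) ?_).1 ?_
    · rwa [show c + 1 + 1 = c + 2 by omega] at this
    · rw [show c + 1 - 1 = c by omega]; exact hbadF
    · have := hmem 1; rwa [key 1] at this
  have m2 : (c + 1, v 2) ∈ F := by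
    have := (phi_g2 hF hasym (x := c + 2) (r := v 2) ?_).1 ?_
    · rwa [show c + 2 - 1 = c + 1 by omega] at this
    · rw [show c + 2 - 2 = c by omega]; exact hbadF
    · have := hmem 2; rwa [key 2] at this
  have m3 : (c + 3, v 3) ∈ F := by
    refine (phi_g3 (lt := lt) (D := D) ?_ ?_).1 ?_
    · rw [show c + 3 - 1 = c + 2 by omega]; exact n5
    · rw [show c + 3 - 2 = c + 1 by omega]; exact n4
    · have := hmem 3; rwa [key 3] at this
  refine ⟨fun s => c + (s : ℕ), fun s => v (Equiv.swap 1 2 s), ?_, ?_, ?_, ?_, ?_⟩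
  · intro a b hab
    have : (a : ℕ) < b := hab
    show c + (a : ℕ) < c + (b : ℕ)
    omega
  · intro s
    fin_cases s
    · simpa [show Equiv.swap (1 : Fin 4) 2 0 = 0 from by decide] using m0
    · simpa [show Equiv.swap (1 : Fin 4) 2 1 = 2 from by decide] using m2
    · simpa [show Equiv.swap (1 : Fin 4) 2 2 = 1 from by decide] using m1
    · simpa [show Equiv.swap (1 : Fin 4) 2 3 = 3 from by decide] using m3
  · intro s t
    rw [hστ s, hστ t]
    exact hiso _ _
  · intro s t
    have := hbox s (Equiv.swap 1 2 t)
    rwa [key s] at this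
  · intro j hj h
    show c + (j + 1) = c + j + 1
    omega

end FSWaux6
section FSWaux7

variable {lt : ℕ → ℕ → Prop} {D : YoungShape} {F : Set (ℕ × ℕ)}

lemma phi_emptyRows (hF : IsFilling D F) :
    emptyRows D (phi lt D F) = emptyRows D F := by
  ext r
  simp only [emptyRows, Set.mem_setOf_eq]
  have hiff : (∀ p ∈ phi lt D F, p.2 ≠ r) ↔ (∀ p ∈ F, p.2 ≠ r) := by
    constructor
    · intro h p hp hpr
      obtain ⟨x, hx⟩ := (phi_rows hF (lt := lt) (r := r)).2
        ⟨p.1, by rw [← hpr]; simpa using hp⟩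
      exact h (x, r) hx rfl
    · intro h p hp hpr
      obtain ⟨y, hy⟩ := (phi_rows hF (lt := lt) (r := r)).1
        ⟨p.1, by rw [← hpr]; simpa using hp⟩
      exact h (y, r) hy rfl
  rw [hiff]

lemma phi_emptyCols (hF : IsFilling D F) :
    emptyCols D (phi lt D F) = emptyCols D F := by
  ext x
  simp only [emptyCols, Set.mem_setOf_eq]
  have hiff : (∀ p ∈ phi lt D F, p.1 ≠ x) ↔ (∀ p ∈ F, p.1 ≠ x) := by
    constructor
    · intro h p hp hpx
      obtain ⟨r, hr⟩ := (phi_cols hF (lt := lt) (x := x)).2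
        ⟨p.2, by rw [← hpx]; simpa using hp⟩
      exact h (x, r) hr rfl
    · intro h p hp hpx
      obtain ⟨r, hr⟩ := (phi_cols hF (lt := lt) (x := x)).1
        ⟨p.2, by rw [← hpx]; simpa using hp⟩
      exact h (x, r) hr rfl
  rw [hiff]

lemma fswilf_of_swap (lt : ℕ → ℕ → Prop) (hasym : ∀ a b, lt a b → lt b a → False)
    (σ τ : Fin 4 → ℕ)
    (hστ : ∀ s, σ s = τ (Equiv.swap 1 2 s))
    (hτσ : ∀ s, τ s = σ (Equiv.swap 1 2 s))
    (hσ : ∀ v : Fin 4 → ℕ, (∀ s t : Fin 4, v s < v t ↔ σ s < σ t) →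
      lt (v 0) (v 1) ∧ lt (v 0) (v 2) ∧ lt (v 3) (v 1) ∧ lt (v 3) (v 2))
    (hτ : ∀ v : Fin 4 → ℕ, (∀ s t : Fin 4, v s < v t ↔ τ s < τ t) →
      lt (v 0) (v 1) ∧ lt (v 0) (v 2) ∧ lt (v 3) (v 1) ∧ lt (v 3) (v 2)) :
    FSWilfEquiv σ (Set.Icc 1 3) τ (Set.Icc 1 3) := by
  intro D R C
  have hAtoB : ∀ F : Set (ℕ × ℕ),
      (IsFilling D F ∧ ¬ FillingContains D F σ (Set.Icc 1 3) ∧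
        emptyRows D F = R ∧ emptyCols D F = C) →
      (IsFilling D (phi lt D F) ∧ ¬ FillingContains D (phi lt D F) τ (Set.Icc 1 3) ∧
        emptyRows D (phi lt D F) = R ∧ emptyCols D (phi lt D F) = C) := by
    rintro F ⟨hF, hav, hR, hC⟩
    refine ⟨phi_filling hF hasym, ?_, ?_, ?_⟩
    · intro h
      exact hav (contains_of_contains_phi hF hasym hστ hτ h)
    · rw [phi_emptyRows hF]; exact hR
    · rw [phi_emptyCols hF]; exact hC
  have hBtoA : ∀ F : Set (ℕ × ℕ),
      (IsFilling D F ∧ ¬ FillingContains D F τ (Set.Icc 1 3) ∧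
        emptyRows D F = R ∧ emptyCols D F = C) →
      (IsFilling D (phi lt D F) ∧ ¬ FillingContains D (phi lt D F) σ (Set.Icc 1 3) ∧
        emptyRows D (phi lt D F) = R ∧ emptyCols D (phi lt D F) = C) := by
    rintro F ⟨hF, hav, hR, hC⟩
    refine ⟨phi_filling hF hasym, ?_, ?_, ?_⟩
    · intro h
      exact hav (contains_of_contains_phi hF hasym hτσ hσ h)
    · rw [phi_emptyRows hF]; exact hR
    · rw [phi_emptyCols hF]; exact hC
  have himg :
      {F : Set (ℕ × ℕ) | IsFilling D F ∧ ¬ FillingContains D F τ (Set.Icc 1 3) ∧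
        emptyRows D F = R ∧ emptyCols D F = C} =
      phi lt D '' {F : Set (ℕ × ℕ) | IsFilling D F ∧
        ¬ FillingContains D F σ (Set.Icc 1 3) ∧
        emptyRows D F = R ∧ emptyCols D F = C} := by
    ext F
    constructor
    · intro hFB
      refine ⟨phi lt D F, hBtoA F hFB, ?_⟩
      exact phi_phi hFB.1 hasym
    · rintro ⟨G, hGA, rfl⟩
      exact hAtoB G hGA
  rw [himg]
  refine (Set.ncard_image_of_injOn ?_).symm
  intro F hFA G hGA h
  have : phi lt D (phi lt D F) = phi lt D (phi lt D G) := by rw [h]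
  rwa [phi_phi hFA.1 hasym, phi_phi hGA.1 hasym] at this

end FSWaux7
/-- The four filling-shape-Wilf-equivalences of consecutive patterns of length 4:
`1342 ≡_fs 1432`, `2341 ≡_fs 2431`, `4213 ≡_fs 4123`, `3214 ≡_fs 3124`. -/
theorem stmt1 :
    FSWilfEquiv (![1,3,4,2] : Fin 4 → ℕ) (Set.Icc 1 3) (![1,4,3,2] : Fin 4 → ℕ) (Set.Icc 1 3) ∧
    FSWilfEquiv (![2,3,4,1] : Fin 4 → ℕ) (Set.Icc 1 3) (![2,4,3,1] : Fin 4 → ℕ) (Set.Icc 1 3) ∧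
    FSWilfEquiv (![4,2,1,3] : Fin 4 → ℕ) (Set.Icc 1 3) (![4,1,2,3] : Fin 4 → ℕ) (Set.Icc 1 3) ∧
    FSWilfEquiv (![3,2,1,4] : Fin 4 → ℕ) (Set.Icc 1 3) (![3,1,2,4] : Fin 4 → ℕ) (Set.Icc 1 3) := by
  have hlt : ∀ a b : ℕ, a < b → b < a → False := fun a b h1 h2 => by omega
  have hgt : ∀ a b : ℕ, b < a → a < b → False := fun a b h1 h2 => by omega
  refine ⟨?_, ?_, ?_, ?_⟩
  · exact fswilf_of_swap (fun a b => a < b) hlt _ _ (by decide) (by decide)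
      (fun v h => ⟨(h 0 1).2 (by decide), (h 0 2).2 (by decide),
        (h 3 1).2 (by decide), (h 3 2).2 (by decide)⟩)
      (fun v h => ⟨(h 0 1).2 (by decide), (h 0 2).2 (by decide),
        (h 3 1).2 (by decide), (h 3 2).2 (by decide)⟩)
  · exact fswilf_of_swap (fun a b => a < b) hlt _ _ (by decide) (by decide)
      (fun v h => ⟨(h 0 1).2 (by decide), (h 0 2).2 (by decide),
        (h 3 1).2 (by decide), (h 3 2).2 (by decide)⟩)
      (fun v h => ⟨(h 0 1).2 (by decide), (h 0 2).2 (by decide),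
        (h 3 1).2 (by decide), (h 3 2).2 (by decide)⟩)
  · exact fswilf_of_swap (fun a b => b < a) hgt _ _ (by decide) (by decide)
      (fun v h => ⟨(h 1 0).2 (by decide), (h 2 0).2 (by decide),
        (h 1 3).2 (by decide), (h 2 3).2 (by decide)⟩)
      (fun v h => ⟨(h 1 0).2 (by decide), (h 2 0).2 (by decide),
        (h 1 3).2 (by decide), (h 2 3).2 (by decide)⟩)
  · exact fswilf_of_swap (fun a b => b < a) hgt _ _ (by decide) (by decide)
      (fun v h => ⟨(h 1 0).2 (by decide), (h 2 0).2 (by decide),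
        (h 1 3).2 (by decide), (h 2 3).2 (by decide)⟩)
      (fun v h => ⟨(h 1 0).2 (by decide), (h 2 0).2 (by decide),
        (h 1 3).2 (by decide), (h 2 3).2 (by decide)⟩)
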